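/- Let Σ ∈ ℝ^{d×d} be symmetric positive definite, let C ∈ ℝ^{d×k} have column space equal to all of ℝᵈ (full row rank), and set S = -Σ⁻¹C. If A ∈ ℝ^{d×d} is invertible and satisfies AAᵀ SSᵀ AAᵀ = CCᵀ with AAᵀ symmetric positive definite, then AAᵀ = Σ. In particular, when the centered draws from N(μ, Σ) span ℝᵈ (which requires at least d + 1 draws), the Fisher-divergence-optimal affine preconditioner recovers the target covariance exactly. -/

import Mathlib

open Matrix
open scoped MatrixOrder

lemma aux_conj_posDef {n : ℕ} {B P : Matrix (Fin n) (Fin n) ℝ}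
    (hB : B.PosDef) (hP : IsUnit P.det) : (P * B * Pᵀ).PosDef := by
  have hBh : Bᵀ = B := hB.isHermitian
  refine Matrix.PosDef.of_dotProduct_mulVec_pos ?_ (fun x hx => ?_)
  · show (P * B * Pᵀ)ᵀ = _
    simp [Matrix.transpose_mul, Matrix.mul_assoc, hBh]
  · have hy : Pᵀ *ᵥ x ≠ 0 := by
      have hinj : Function.Injective (Pᵀ).mulVec :=
        Matrix.mulVec_injective_iff_isUnit.mpr ((Matrix.isUnit_iff_isUnit_det _).2 (by simpa using hP))
      intro h0
      exact hx (hinj (by simpa using h0))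
    have h2 := hB.dotProduct_mulVec_pos hy
    have key : (x : Fin n → ℝ) ⬝ᵥ (P * B * Pᵀ) *ᵥ x = (Pᵀ *ᵥ x) ⬝ᵥ B *ᵥ (Pᵀ *ᵥ x) := by
      simp only [Matrix.dotProduct_mulVec, ← Matrix.vecMul_vecMul, Matrix.mulVec_transpose]
      rw [Matrix.vecMul_transpose, dotProduct_comm, Matrix.dotProduct_mulVec,
        dotProduct_comm]
    simpa [key] using h2

lemma aux_isUnit_det_of_sq {n : ℕ} {R M : Matrix (Fin n) (Fin n) ℝ}
    (hRR : R * R = M) (hM : M.PosDef) : IsUnit R.det := by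
  have h1 : R.det * R.det = M.det := by rw [← Matrix.det_mul, hRR]
  have h2 := hM.det_pos
  exact isUnit_iff_ne_zero.mpr fun h0 => by rw [h0, mul_zero] at h1; linarith


/-- Let `Sgm` be SPD, `C : d×k` with column space all of `ℝᵈ`, and
`S = -Sgm⁻¹C`. If `A` is invertible, `AAᵀ` is SPD, and `AAᵀ SSᵀ AAᵀ = CCᵀ`, then
`AAᵀ = Sgm`: the Fisher-divergence-optimal affine preconditioner recovers the
target covariance exactly. -/
theorem fisher_hmc_full_rank_exact_recovery
    (d k : ℕ) (Sgm : Matrix (Fin d) (Fin d) ℝ) (hSgm : Sgm.PosDef)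
    (C : Matrix (Fin d) (Fin k) ℝ)
    (hC : ∀ v : Fin d → ℝ, ∃ w : Fin k → ℝ, C.mulVec w = v)
    (S : Matrix (Fin d) (Fin k) ℝ) (hS : S = -(Sgm⁻¹ * C))
    (A : Matrix (Fin d) (Fin d) ℝ) (hA : IsUnit A.det)
    (hAAT : (A * Aᵀ).PosDef)
    (h : (A * Aᵀ) * (S * Sᵀ) * (A * Aᵀ) = C * Cᵀ) :
    A * Aᵀ = Sgm := by
  have hG : (C * Cᵀ).PosDef := by
    refine Matrix.PosDef.of_dotProduct_mulVec_pos ?_ (fun x hx => ?_)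
    · show (C * Cᵀ)ᵀ = _
      simp [Matrix.transpose_mul]
    · have hy : Cᵀ *ᵥ x ≠ 0 := by
        intro h0
        obtain ⟨w, hw⟩ := hC x
        apply hx
        have hxx : x ⬝ᵥ x = 0 := by
          nth_rewrite 2 [← hw]
          rw [Matrix.dotProduct_mulVec, ← Matrix.mulVec_transpose, h0, zero_dotProduct]
        exact dotProduct_self_eq_zero.mp hxx
      have key : x ⬝ᵥ (C * Cᵀ) *ᵥ x = (Cᵀ *ᵥ x) ⬝ᵥ (Cᵀ *ᵥ x) := by
        rw [← Matrix.mulVec_mulVec, Matrix.dotProduct_mulVec, ← Matrix.mulVec_transpose]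
      have hnn : (0:ℝ) ≤ (Cᵀ *ᵥ x) ⬝ᵥ (Cᵀ *ᵥ x) :=
        Finset.sum_nonneg fun i _ => mul_self_nonneg _
      show 0 < x ⬝ᵥ (C * Cᵀ) *ᵥ x
      rw [key]
      exact lt_of_le_of_ne hnn fun e => hy (dotProduct_self_eq_zero.mp e.symm)
  -- symmetry facts
  have hSymm : Sgmᵀ = Sgm := hSgm.isHermitian
  have hSgmInvT : Sgm⁻¹ᵀ = Sgm⁻¹ := by rw [Matrix.transpose_nonsing_inv, hSymm]
  -- rewrite the equation
  have key : (A * Aᵀ) * (Sgm⁻¹ * ((C * Cᵀ) * Sgm⁻¹)) * (A * Aᵀ) = C * Cᵀ := by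
    have hSST : S * Sᵀ = Sgm⁻¹ * ((C * Cᵀ) * Sgm⁻¹) := by
      rw [hS]
      simp only [Matrix.transpose_neg, Matrix.transpose_mul, hSgmInvT, Matrix.neg_mul,
        Matrix.mul_neg, neg_neg, Matrix.mul_assoc]
    rwa [hSST] at h
  -- square root of Sgm
  set R := CFC.sqrt Sgm with hRdef
  have hRsym : Rᵀ = R := (CFC.sqrt_nonneg Sgm).posSemidef.1
  have hRR : R * R = Sgm := CFC.sqrt_mul_sqrt_self Sgm hSgm.posSemidef.nonneg
  have hRdet : IsUnit R.det := aux_isUnit_det_of_sq hRR hSgm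
  have hRinvT : R⁻¹ᵀ = R⁻¹ := by rw [Matrix.transpose_nonsing_inv, hRsym]
  have hRinvDet : IsUnit R⁻¹.det := R.isUnit_nonsing_inv_det hRdet
  have hRRinv : ∀ X : Matrix (Fin d) (Fin d) ℝ, R⁻¹ * (R⁻¹ * X) = Sgm⁻¹ * X := fun X => by
    rw [← Matrix.mul_assoc, ← Matrix.mul_inv_rev, hRR]
  set T := R⁻¹ * (A * Aᵀ) * R⁻¹ with hTdef
  set H := R⁻¹ * (C * Cᵀ) * R⁻¹ with hHdef
  have hT : T.PosDef := by
    have := aux_conj_posDef hAAT hRinvDet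
    rwa [hRinvT] at this
  have hH : H.PosDef := by
    have := aux_conj_posDef hG hRinvDet
    rwa [hRinvT] at this
  have hTHT : T * H * T = H := by
    have key' := congrArg (· * R⁻¹) key
    simp only [Matrix.mul_assoc] at key'
    rw [hTdef, hHdef]
    simp only [Matrix.mul_assoc, hRRinv]
    rw [key']
  -- square root of H
  set Q := CFC.sqrt H with hQdef
  have hQsym : Qᵀ = Q := (CFC.sqrt_nonneg H).posSemidef.1
  have hQQ : Q * Q = H := CFC.sqrt_mul_sqrt_self H hH.posSemidef.nonneg
  have hQdet : IsUnit Q.det := aux_isUnit_det_of_sq hQQ hH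
  have hX : (Q * T * Q).PosDef := by
    have := aux_conj_posDef hT hQdet
    rwa [hQsym] at this
  have hX2 : (Q * T * Q) ^ 2 = H ^ 2 := by
    rw [pow_two, pow_two]
    calc Q * T * Q * (Q * T * Q) = Q * (T * (Q * Q) * T) * Q := by
          simp only [Matrix.mul_assoc]
      _ = Q * H * Q := by rw [hQQ, hTHT]
      _ = H * H := by rw [← hQQ]; simp only [Matrix.mul_assoc]
  have hH2 : ((H : Matrix (Fin d) (Fin d) ℝ) ^ 2).PosSemidef := hH.posSemidef.pow 2
  have hXH : Q * T * Q = H := by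
    have e1 : Q * T * Q = CFC.sqrt (H ^ 2) := by
        rw [← hX2, CFC.sqrt_sq _ hX.posSemidef.nonneg]
    have e2 : H = CFC.sqrt (H ^ 2) := (CFC.sqrt_sq H hH.posSemidef.nonneg).symm
    exact e1.trans e2.symm
  have hT1 : T = 1 := by
    have e3 : Q * T * Q = Q * Q := by rw [hXH, hQQ]
    have e4 := congrArg (fun Z => Q⁻¹ * Z * Q⁻¹) e3
    simpa [Matrix.mul_assoc, Matrix.mul_nonsing_inv _ hQdet,
      Matrix.nonsing_inv_mul _ hQdet, Matrix.nonsing_inv_mul_cancel_left _ _ hQdet] using e4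
  have e5 := congrArg (fun Z => R * Z * R) hT1
  have e6 : R * (R⁻¹ * (A * Aᵀ) * R⁻¹) * R = A * Aᵀ := by
    simp only [Matrix.mul_assoc]
    rw [Matrix.nonsing_inv_mul _ hRdet, Matrix.mul_one,
      Matrix.mul_nonsing_inv_cancel_left _ _ hRdet]
  rw [hTdef] at e5
  simp only [e6, Matrix.mul_one] at e5
  rw [e5, hRR]
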